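/- Degree invariant (termination of the scheme): let p be a prime, P, Q ∈ 𝔽_p[x] with deg Q ≤ deg P, and let 0 ≤ i ≤ p−1 and 0 ≤ α ≤ p−1. Then deg R_α(Q·P^i) ≤ deg P. Hence the set of polynomials produced from Q₁ = 1 by repeatedly applying the maps Q ↦ R_α(Q·P^i) is contained in the finite set of polynomials over 𝔽_p of degree at most deg P. -/
import Mathlib


open Polynomial

/-- The `α`-th section `R_α(F)` of a polynomial `F` over `ZMod p`:
the coefficient of `x^j` in `R_α(F)` is the coefficient of `x^{p·j+α}` in `F`. -/
noncomputable def sect (p : ℕ) (α : ℕ) (F : (ZMod p)[X]) : (ZMod p)[X] :=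
  ∑ j ∈ Finset.range (F.natDegree + 1), Polynomial.C (F.coeff (p * j + α)) * X ^ j

lemma sect_coeff (p α : ℕ) (F : (ZMod p)[X]) (n : ℕ) :
    (sect p α F).coeff n = if n ≤ F.natDegree then F.coeff (p * n + α) else 0 := by
  unfold sect
  rw [finset_sum_coeff]
  simp only [coeff_C_mul, coeff_X_pow, mul_ite, mul_one, mul_zero]
  rw [Finset.sum_ite_eq (Finset.range (F.natDegree + 1)) n (fun j => F.coeff (p * j + α))]
  simp [Nat.lt_succ_iff]

lemma sect_deg (p : ℕ) (hp : p.Prime) (P Q : (ZMod p)[X])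
    (hQ : Q.natDegree ≤ P.natDegree) (i α : ℕ) (hi : i < p) :
    (sect p α (Q * P ^ i)).natDegree ≤ P.natDegree := by
  rw [natDegree_le_iff_coeff_eq_zero]
  intro N hN
  rw [sect_coeff]
  split
  · apply coeff_eq_zero_of_natDegree_lt
    calc (Q * P ^ i).natDegree ≤ Q.natDegree + (P ^ i).natDegree := natDegree_mul_le
      _ ≤ P.natDegree + i * P.natDegree := by
          exact add_le_add hQ (natDegree_pow_le)
      _ = (1 + i) * P.natDegree := by ring
      _ ≤ p * P.natDegree := Nat.mul_le_mul_right _ (by omega)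
      _ < p * N := by
          have := hp.pos
          calc p * P.natDegree < p * (P.natDegree + 1) :=
                Nat.mul_lt_mul_of_pos_left (Nat.lt_succ_self _) hp.pos
            _ ≤ p * N := Nat.mul_le_mul_left _ (by omega)
      _ ≤ p * N + α := Nat.le_add_right _ _
  · rfl

lemma mem_S (p n : ℕ) [NeZero p] (g : (ZMod p)[X]) (hg : g.natDegree ≤ n) :
    g ∈ Finset.image (fun f : Fin (n + 1) → ZMod p =>
      ∑ k : Fin (n + 1), C (f k) * X ^ (k : ℕ)) Finset.univ := by
  refine Finset.mem_image.mpr ⟨fun k => g.coeff k, Finset.mem_univ _, ?_⟩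
  rw [Fin.sum_univ_eq_sum_range (fun k => C (g.coeff k) * X ^ k)]
  conv_rhs => rw [g.as_sum_range' (n + 1) (Nat.lt_succ_of_le hg)]
  simp [C_mul_X_pow_eq_monomial]

lemma deg_S (p n : ℕ) [NeZero p] (g : (ZMod p)[X])
    (hg : g ∈ Finset.image (fun f : Fin (n + 1) → ZMod p =>
      ∑ k : Fin (n + 1), C (f k) * X ^ (k : ℕ)) Finset.univ) : g.natDegree ≤ n := by
  obtain ⟨f, -, rfl⟩ := Finset.mem_image.mp hg
  apply natDegree_sum_le_of_forall_le
  intro k _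
  exact le_trans (natDegree_C_mul_X_pow_le _ _) (Nat.lt_succ_iff.mp k.isLt)

theorem degree_invariant (p : ℕ) (hp : p.Prime) (P Q : (ZMod p)[X])
    (hQ : Q.natDegree ≤ P.natDegree) (i α : ℕ) (hi : i < p) (hα : α < p) :
    (sect p α (Q * P ^ i)).natDegree ≤ P.natDegree ∧
    (∃ S : Finset (ZMod p)[X], (1 : (ZMod p)[X]) ∈ S ∧
      (∀ Q' ∈ S, Q'.natDegree ≤ P.natDegree) ∧
      ∀ Q' ∈ S, ∀ i' < p, ∀ α' < p, sect p α' (Q' * P ^ i') ∈ S) := by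
  haveI : NeZero p := ⟨hp.ne_zero⟩
  refine ⟨sect_deg p hp P Q hQ i α hi, ?_⟩
  set n := P.natDegree
  refine ⟨Finset.image (fun f : Fin (n + 1) → ZMod p =>
      ∑ k : Fin (n + 1), C (f k) * X ^ (k : ℕ)) Finset.univ, ?_, ?_, ?_⟩
  · exact mem_S p n 1 (by simp)
  · exact fun Q' h => deg_S p n Q' h
  · intro Q' h i' hi' α' hα'
    exact mem_S p n _ (sect_deg p hp P Q' (deg_S p n Q' h) i' α' hi')
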